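/- Let μ be a probability measure on ℝ^d, let V ∈ St(d,r) and W ∈ St(d,d−r) satisfy V Vᵀ + W Wᵀ = I_d, and suppose the sliced Poincaré inequality holds for (μ, V) with constant C_P > 0. Let f_∞ : ℝ^d → ℝ be in L²(μ) and let f_L : ℝ^d → ℝ be continuously differentiable with f_L and ‖∇f_L‖ square-integrable with respect to μ. Define g⋆_L(x) := ∫ f_L(Vx + Wz) μ_{Z|X}(dz|x), where (μ_{Z|X}(·|x))_x is a disintegration of the pushforward of μ under y ↦ (Vᵀy, Wᵀy). Then the single-level error decomposition holds: ‖f_∞ − g⋆_L ∘ (Vᵀ·)‖_{L²(μ)} ≤ ‖f_∞ − f_L‖_{L²(μ)} + C_P ‖(I_d − V Vᵀ) ∇f_L‖_{L²(μ;ℝ^d)}. -/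

import Mathlib

open MeasureTheory ProbabilityTheory Matrix
open scoped ProbabilityTheory ENNReal NNReal

noncomputable section

/-- The gradient of `f : ℝ^d → ℝ` at `y`, as the vector of partial derivatives. -/
def grad {d : ℕ} (f : (Fin d → ℝ) → ℝ) (y : Fin d → ℝ) : Fin d → ℝ :=
  fun i => fderiv ℝ f y (Pi.single i 1)

/-- Squared Euclidean norm on `ℝ^d`. -/
def sqnorm {d : ℕ} (v : Fin d → ℝ) : ℝ := ∑ i, v i ^ 2

lemma sqnorm_nonneg {d : ℕ} (v : Fin d → ℝ) : 0 ≤ sqnorm v :=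
  Finset.sum_nonneg fun _ _ => sq_nonneg _

lemma sqnorm_eq_dot {d : ℕ} (v : Fin d → ℝ) : sqnorm v = v ⬝ᵥ v := by
  simp [sqnorm, dotProduct, sq]

lemma sqnorm_mulVec {m n : ℕ} (A : Matrix (Fin m) (Fin n) ℝ) (v : Fin n → ℝ) :
    sqnorm (A.mulVec v) = v ⬝ᵥ ((Aᵀ * A).mulVec v) := by
  rw [sqnorm_eq_dot, ← Matrix.mulVec_mulVec,
    show v ⬝ᵥ Aᵀ *ᵥ (A *ᵥ v) = (v ᵥ* Aᵀ) ⬝ᵥ (A *ᵥ v) from Matrix.dotProduct_mulVec _ _ _,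
    Matrix.vecMul_transpose]

lemma proj_eq {d r s : ℕ} (V : Matrix (Fin d) (Fin r) ℝ) (W : Matrix (Fin d) (Fin s) ℝ)
    (hV : Vᵀ * V = 1) (hVW : V * Vᵀ + W * Wᵀ = 1) (v : Fin d → ℝ) :
    sqnorm (((1 : Matrix (Fin d) (Fin d) ℝ) - V * Vᵀ).mulVec v) = sqnorm (Wᵀ.mulVec v) := by
  have hWW : W * Wᵀ = 1 - V * Vᵀ := by rw [← hVW]; abel
  rw [sqnorm_mulVec, sqnorm_mulVec, transpose_transpose, hWW]
  congr 1
  rw [Matrix.transpose_sub, Matrix.transpose_one, Matrix.transpose_mul, transpose_transpose]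
  rw [Matrix.sub_mul, Matrix.mul_sub, Matrix.mul_sub, Matrix.one_mul, Matrix.mul_one,
    show V * Vᵀ * (V * Vᵀ) = V * (Vᵀ * V) * Vᵀ by
      rw [Matrix.mul_assoc, Matrix.mul_assoc, Matrix.mul_assoc], hV]
  simp

lemma sqnorm_Wt_le {d r s : ℕ} (V : Matrix (Fin d) (Fin r) ℝ) (W : Matrix (Fin d) (Fin s) ℝ)
    (hVW : V * Vᵀ + W * Wᵀ = 1) (v : Fin d → ℝ) :
    sqnorm (Wᵀ.mulVec v) ≤ sqnorm v := by
  have hWW : W * Wᵀ = 1 - V * Vᵀ := by rw [← hVW]; abel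
  have h1 : sqnorm (Wᵀ.mulVec v) = sqnorm v - sqnorm (Vᵀ.mulVec v) := by
    rw [sqnorm_mulVec, sqnorm_mulVec, transpose_transpose, transpose_transpose, hWW,
      Matrix.sub_mulVec, dotProduct_sub, Matrix.one_mulVec, ← sqnorm_eq_dot]
  have := sqnorm_nonneg (Vᵀ.mulVec v)
  linarith

lemma clm_apply_eq_sum {n : ℕ} (φ : (Fin n → ℝ) →L[ℝ] ℝ) (v : Fin n → ℝ) :
    φ v = ∑ j, v j * φ (Pi.single j 1) := by
  have hv : v = ∑ j, v j • (Pi.single j 1 : Fin n → ℝ) := by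
    funext k
    simp [Finset.sum_apply, Pi.single_apply]
  conv_lhs => rw [hv]
  rw [map_sum]
  simp [_root_.map_smul, smul_eq_mul]

/-- `mulVec` as a continuous linear map. -/
def mulVecCLM {m n : ℕ} (A : Matrix (Fin m) (Fin n) ℝ) : (Fin n → ℝ) →L[ℝ] (Fin m → ℝ) :=
  LinearMap.toContinuousLinearMap (Matrix.mulVecLin A)

lemma mulVecCLM_apply {m n : ℕ} (A : Matrix (Fin m) (Fin n) ℝ) (v : Fin n → ℝ) :
    mulVecCLM A v = A.mulVec v := rfl

lemma continuous_mulVec {m n : ℕ} (A : Matrix (Fin m) (Fin n) ℝ) :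
    Continuous fun v => A.mulVec v := (mulVecCLM A).continuous

lemma continuous_sqnorm {n : ℕ} : Continuous (sqnorm : (Fin n → ℝ) → ℝ) :=
  continuous_finset_sum _ fun i _ => (continuous_apply i).pow 2

lemma grad_affine_comp {d s : ℕ} {f : (Fin d → ℝ) → ℝ} (hf : ContDiff ℝ 1 f)
    (W : Matrix (Fin d) (Fin s) ℝ) (c : Fin d → ℝ) (z : Fin s → ℝ) :
    grad (fun w => f (c + W.mulVec w)) z = Wᵀ.mulVec (grad f (c + W.mulVec z)) := by
  have hg : HasFDerivAt (fun w : Fin s → ℝ => c + W.mulVec w) (mulVecCLM W) z := by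
    simpa [mulVecCLM_apply] using ((mulVecCLM W).hasFDerivAt (x := z)).const_add c
  have hF : HasFDerivAt (fun w => f (c + W.mulVec w))
      ((fderiv ℝ f (c + W.mulVec z)).comp (mulVecCLM W)) z :=
    ((hf.differentiable one_ne_zero (c + W.mulVec z)).hasFDerivAt).comp z hg
  funext i
  rw [grad, hF.fderiv]
  simp only [ContinuousLinearMap.comp_apply, mulVecCLM_apply]
  rw [clm_apply_eq_sum _ (W.mulVec (Pi.single i 1))]
  simp only [Matrix.mulVec_single, mul_one]
  simp only [grad, Matrix.mulVec, dotProduct, Matrix.transpose_apply, MulOpposite.op_one, one_smul,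
    Matrix.col_apply]

lemma grad_sub_const {d : ℕ} (f : (Fin d → ℝ) → ℝ) (c : ℝ) (y : Fin d → ℝ) :
    grad (fun z => f z - c) y = grad f y := by
  funext i
  simp [grad, fderiv_sub_const]

lemma eLpNorm_two_eq {α : Type*} [MeasurableSpace α] (μ : Measure α)
    (f : α → ℝ) (hf : MemLp f 2 μ) :
    eLpNorm f 2 μ = ENNReal.ofReal (Real.sqrt (∫ y, (f y)^2 ∂μ)) := by
  rw [hf.eLpNorm_eq_integral_rpow_norm two_ne_zero ENNReal.ofNat_ne_top]
  congr 1
  rw [Real.sqrt_eq_rpow]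
  norm_num

lemma sqrt_integral_sq_add_le {α : Type*} [MeasurableSpace α] (μ : Measure α)
    (u v : α → ℝ) (hu : MemLp u 2 μ) (hv : MemLp v 2 μ) :
    Real.sqrt (∫ y, (u y + v y)^2 ∂μ) ≤
      Real.sqrt (∫ y, (u y)^2 ∂μ) + Real.sqrt (∫ y, (v y)^2 ∂μ) := by
  have h1 := eLpNorm_add_le hu.aestronglyMeasurable hv.aestronglyMeasurable one_le_two
  rw [eLpNorm_two_eq μ _ (hu.add hv), eLpNorm_two_eq μ u hu, eLpNorm_two_eq μ v hv,
    ← ENNReal.ofReal_add (Real.sqrt_nonneg _) (Real.sqrt_nonneg _)] at h1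
  have h2 := (ENNReal.ofReal_le_ofReal_iff (by positivity)).mp h1
  simpa using h2

/-- the single-level error decomposition
`‖f_∞ − g⋆_L ∘ (Vᵀ·)‖_{L²(μ)} ≤ ‖f_∞ − f_L‖_{L²(μ)} + C_P ‖(I − V Vᵀ)∇f_L‖_{L²(μ;ℝ^d)}`. -/
theorem single_level_error_decomposition
    {d r s : ℕ} (μ : Measure (Fin d → ℝ)) [IsProbabilityMeasure μ]
    (V : Matrix (Fin d) (Fin r) ℝ) (W : Matrix (Fin d) (Fin s) ℝ)
    (hV : Vᵀ * V = 1) (hW : Wᵀ * W = 1)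
    (hVW : V * Vᵀ + W * Wᵀ = 1)
    (finf : (Fin d → ℝ) → ℝ) (hfinf : MemLp finf 2 μ)
    (fL : (Fin d → ℝ) → ℝ) (hfL : ContDiff ℝ 1 fL)
    (hfL2 : MemLp fL 2 μ)
    (hgradL2 : Integrable (fun y => sqnorm (grad fL y)) μ)
    -- disintegration of the pushforward of μ under y ↦ (Vᵀy, Wᵀy) w.r.t. its first marginal
    (κ : Kernel (Fin r → ℝ) (Fin s → ℝ)) [IsMarkovKernel κ]
    (hdis : μ.map (fun y => (Vᵀ.mulVec y, Wᵀ.mulVec y)) = (μ.map (Vᵀ.mulVec ·)) ⊗ₘ κ)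
    -- the sliced Poincaré inequality for (μ, V) with constant C_P
    (CP : ℝ) (hCP : 0 < CP)
    (hPoincare : ∀ᵐ x ∂(μ.map (Vᵀ.mulVec ·)), ∀ h : (Fin s → ℝ) → ℝ,
      ContDiff ℝ 1 h → MemLp h 2 (κ x) →
      Integrable (fun z => sqnorm (grad h z)) (κ x) →
      (∫ z, h z ∂(κ x)) = 0 →
      Real.sqrt (∫ z, (h z) ^ 2 ∂(κ x)) ≤
        CP * Real.sqrt (∫ z, sqnorm (grad h z) ∂(κ x)))
    -- the conditional average g⋆_L of f_L
    (gstarL : (Fin r → ℝ) → ℝ)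
    (hgstarL : ∀ x, gstarL x = ∫ z, fL (V.mulVec x + W.mulVec z) ∂(κ x)) :
    Real.sqrt (∫ y, (finf y - gstarL (Vᵀ.mulVec y)) ^ 2 ∂μ) ≤
      Real.sqrt (∫ y, (finf y - fL y) ^ 2 ∂μ) +
        CP * Real.sqrt
          (∫ y, sqnorm (((1 : Matrix (Fin d) (Fin d) ℝ) - V * Vᵀ).mulVec (grad fL y)) ∂μ) := by
  -- basic measurability / continuity facts
  have hcontVt : Continuous fun y : Fin d → ℝ => Vᵀ.mulVec y := continuous_mulVec _
  have hcontWt : Continuous fun y : Fin d → ℝ => Wᵀ.mulVec y := continuous_mulVec _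
  set T : (Fin d → ℝ) → (Fin r → ℝ) × (Fin s → ℝ) :=
    fun y => (Vᵀ.mulVec y, Wᵀ.mulVec y) with hT_def
  have hTmeas : Measurable T := (hcontVt.measurable.prodMk hcontWt.measurable)
  set ν : Measure (Fin r → ℝ) := μ.map (Vᵀ.mulVec ·) with hν_def
  haveI : IsProbabilityMeasure ν := Measure.isProbabilityMeasure_map hcontVt.measurable.aemeasurable
  -- reconstruction identity
  have hrecon : ∀ y, V.mulVec (Vᵀ.mulVec y) + W.mulVec (Wᵀ.mulVec y) = y := by
    intro y
    rw [Matrix.mulVec_mulVec, Matrix.mulVec_mulVec, ← Matrix.add_mulVec, hVW, Matrix.one_mulVec]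
  -- continuity of the inner function
  have hcont_inner : Continuous fun p : (Fin r → ℝ) × (Fin s → ℝ) =>
      fL (V.mulVec p.1 + W.mulVec p.2) :=
    hfL.continuous.comp (((continuous_mulVec V).comp continuous_fst).add
      ((continuous_mulVec W).comp continuous_snd))
  -- gstarL is strongly measurable
  have hgs : StronglyMeasurable gstarL := by
    have h1 : StronglyMeasurable fun x => ∫ z, fL (V.mulVec x + W.mulVec z) ∂(κ x) :=
      StronglyMeasurable.integral_kernel_prod_right' (κ := κ) hcont_inner.stronglyMeasurable
    exact (funext hgstarL : gstarL = _) ▸ h1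
  -- the two key functions on the product space
  set F : (Fin r → ℝ) × (Fin s → ℝ) → ℝ :=
    fun p => fL (V.mulVec p.1 + W.mulVec p.2) - gstarL p.1 with hF_def
  set G : (Fin r → ℝ) × (Fin s → ℝ) → ℝ :=
    fun p => sqnorm (Wᵀ.mulVec (grad fL (V.mulVec p.1 + W.mulVec p.2))) with hG_def
  have hFsm : StronglyMeasurable F :=
    hcont_inner.stronglyMeasurable.sub (hgs.comp_measurable measurable_fst)
  have hgradcont : Continuous fun y => grad fL y := by
    have h1 : Continuous fun y => fderiv ℝ fL y := hfL.continuous_fderiv one_ne_zero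
    exact continuous_pi fun i =>
      (ContinuousLinearMap.apply ℝ ℝ (Pi.single i 1 : Fin d → ℝ)).continuous.comp h1
  have hGcont : Continuous G :=
    (continuous_sqnorm.comp ((continuous_mulVec Wᵀ).comp (hgradcont.comp
      (((continuous_mulVec V).comp continuous_fst).add
        ((continuous_mulVec W).comp continuous_snd)))))
  -- transfer integrability to the product space
  have hfLsq : Integrable (fun y => (fL y)^2) μ :=
    (memLp_two_iff_integrable_sq hfL2.aestronglyMeasurable).mp hfL2
  have hmapT : μ.map T = ν ⊗ₘ κ := hdis
  have hFsq_int : Integrable (fun p => (fL (V.mulVec p.1 + W.mulVec p.2))^2) (ν ⊗ₘ κ) := by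
    rw [← hmapT, integrable_map_measure
      (by exact (hcont_inner.pow 2).aestronglyMeasurable) hTmeas.aemeasurable]
    have : (fun p : (Fin r → ℝ) × (Fin s → ℝ) =>
        (fL (V.mulVec p.1 + W.mulVec p.2))^2) ∘ T = fun y => (fL y)^2 := by
      funext y
      show (fL (V.mulVec (Vᵀ.mulVec y) + W.mulVec (Wᵀ.mulVec y)))^2 = (fL y)^2
      rw [hrecon y]
    rw [this]; exact hfLsq
  have hGwt_int : Integrable (fun y => sqnorm (Wᵀ.mulVec (grad fL y))) μ := by
    refine hgradL2.mono ?_ ?_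
    · exact (continuous_sqnorm.comp ((continuous_mulVec Wᵀ).comp
        hgradcont)).aestronglyMeasurable
    · refine Filter.Eventually.of_forall fun y => ?_
      rw [Real.norm_eq_abs, Real.norm_eq_abs, abs_of_nonneg (sqnorm_nonneg _),
        abs_of_nonneg (sqnorm_nonneg _)]
      exact sqnorm_Wt_le V W hVW _
  have hG_int : Integrable G (ν ⊗ₘ κ) := by
    rw [← hmapT, integrable_map_measure hGcont.aestronglyMeasurable hTmeas.aemeasurable]
    have : G ∘ T = fun y => sqnorm (Wᵀ.mulVec (grad fL y)) := by
      funext y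
      show sqnorm (Wᵀ.mulVec (grad fL (V.mulVec (Vᵀ.mulVec y) + W.mulVec (Wᵀ.mulVec y))))
        = sqnorm (Wᵀ.mulVec (grad fL y))
      rw [hrecon y]
    rw [this]; exact hGwt_int
  -- a.e. sections
  have hFsq_sect : ∀ᵐ x ∂ν, Integrable
      (fun z => (fL (V.mulVec x + W.mulVec z))^2) (κ x) :=
    ((Measure.integrable_compProd_iff
      (hcont_inner.pow 2).aestronglyMeasurable).mp hFsq_int).1
  have hG_sect : ∀ᵐ x ∂ν, Integrable (fun z => G (x, z)) (κ x) :=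
    ((Measure.integrable_compProd_iff hGcont.aestronglyMeasurable).mp hG_int).1
  -- the slicewise Poincaré estimate
  have hslice : ∀ᵐ x ∂ν,
      (∫⁻ z, ENNReal.ofReal ((F (x, z))^2) ∂(κ x)) ≤
        ENNReal.ofReal (CP^2) * ∫⁻ z, ENNReal.ofReal (G (x, z)) ∂(κ x) := by
    filter_upwards [hPoincare, hFsq_sect, hG_sect] with x hP hs hGx
    set c : Fin d → ℝ := V.mulVec x with hc_def
    set h : (Fin s → ℝ) → ℝ := fun z => fL (c + W.mulVec z) - gstarL x with hh_def
    have hgradh : ∀ z, grad h z = Wᵀ.mulVec (grad fL (c + W.mulVec z)) := by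
      intro z
      rw [hh_def]
      rw [show (fun z => fL (c + W.mulVec z) - gstarL x)
          = fun z => (fun w => fL (c + W.mulVec w)) z - gstarL x from rfl]
      rw [grad_sub_const, grad_affine_comp hfL]
    have hmem1 : MemLp (fun z => fL (c + W.mulVec z)) 2 (κ x) :=
      (memLp_two_iff_integrable_sq
        (hfL.continuous.comp (continuous_const.add (continuous_mulVec W))
          ).aestronglyMeasurable).mpr hs
    have hh1 : ContDiff ℝ 1 h := by
      refine ContDiff.sub ?_ contDiff_const
      exact hfL.comp (contDiff_const.add (mulVecCLM W).contDiff)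
    have hh2 : MemLp h 2 (κ x) := hmem1.sub (memLp_const _)
    have hh3 : Integrable (fun z => sqnorm (grad h z)) (κ x) := by
      have : (fun z => sqnorm (grad h z)) = fun z => G (x, z) := by
        funext z; rw [hgradh z]
      rw [this]; exact hGx
    have hh4 : (∫ z, h z ∂(κ x)) = 0 := by
      rw [hh_def]
      rw [integral_sub (hmem1.integrable one_le_two) (integrable_const _)]
      simp [hgstarL x, hc_def]
    have hineq := hP h hh1 hh2 hh3 hh4
    -- square the inequality
    have hnn1 : 0 ≤ ∫ z, (h z)^2 ∂(κ x) := integral_nonneg fun z => sq_nonneg _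
    have hnn2 : 0 ≤ ∫ z, sqnorm (grad h z) ∂(κ x) := integral_nonneg fun z => sqnorm_nonneg _
    have hsq : (∫ z, (h z)^2 ∂(κ x)) ≤ CP^2 * ∫ z, sqnorm (grad h z) ∂(κ x) := by
      have h1 : (∫ z, (h z)^2 ∂(κ x)) = (Real.sqrt (∫ z, (h z)^2 ∂(κ x)))^2 :=
        (Real.sq_sqrt hnn1).symm
      have h2 : (Real.sqrt (∫ z, (h z)^2 ∂(κ x)))^2 ≤
          (CP * Real.sqrt (∫ z, sqnorm (grad h z) ∂(κ x)))^2 := by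
        apply sq_le_sq' _ hineq
        have := Real.sqrt_nonneg (∫ z, (h z)^2 ∂(κ x))
        nlinarith [Real.sqrt_nonneg (∫ z, sqnorm (grad h z) ∂(κ x))]
      rw [h1]
      calc (Real.sqrt (∫ z, (h z)^2 ∂(κ x)))^2 ≤ _ := h2
        _ = CP^2 * ∫ z, sqnorm (grad h z) ∂(κ x) := by
          rw [mul_pow, Real.sq_sqrt hnn2]
    -- convert to lintegrals
    have hFh : ∀ z, F (x, z) = h z := fun z => rfl
    have hhsq_int : Integrable (fun z => (h z)^2) (κ x) :=
      (memLp_two_iff_integrable_sq hh2.aestronglyMeasurable).mp hh2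
    have e1 : (∫⁻ z, ENNReal.ofReal ((F (x, z))^2) ∂(κ x)) =
        ENNReal.ofReal (∫ z, (h z)^2 ∂(κ x)) := by
      rw [← ofReal_integral_eq_lintegral_ofReal hhsq_int
        (Filter.Eventually.of_forall fun z => sq_nonneg _)]
    have e2 : (∫⁻ z, ENNReal.ofReal (G (x, z)) ∂(κ x)) =
        ENNReal.ofReal (∫ z, G (x, z) ∂(κ x)) := by
      rw [← ofReal_integral_eq_lintegral_ofReal hGx
        (Filter.Eventually.of_forall fun z => sqnorm_nonneg _)]
    have e3 : (∫ z, sqnorm (grad h z) ∂(κ x)) = ∫ z, G (x, z) ∂(κ x) := by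
      refine integral_congr_ae (Filter.Eventually.of_forall fun z => ?_)
      show sqnorm (grad h z) = G (x, z)
      rw [hgradh z]
    rw [e1, e2, ← ENNReal.ofReal_mul (sq_nonneg CP)]
    exact ENNReal.ofReal_le_ofReal (by rw [← e3]; exact hsq)
  -- the global lintegral bound
  set v : (Fin d → ℝ) → ℝ := fun y => fL y - gstarL (Vᵀ.mulVec y) with hv_def
  have hvF : ∀ y, v y = F (T y) := by
    intro y
    show fL y - gstarL (Vᵀ.mulVec y)
      = fL (V.mulVec (Vᵀ.mulVec y) + W.mulVec (Wᵀ.mulVec y)) - gstarL (Vᵀ.mulVec y)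
    rw [hrecon y]
  have hFmeas2 : Measurable fun p => ENNReal.ofReal ((F p)^2) :=
    (hFsm.measurable.pow_const 2).ennreal_ofReal
  have hGmeas2 : Measurable fun p => ENNReal.ofReal (G p) :=
    hGcont.measurable.ennreal_ofReal
  set Iwt : ℝ := ∫ y, sqnorm (Wᵀ.mulVec (grad fL y)) ∂μ with hIwt_def
  have hIwt_nonneg : 0 ≤ Iwt := integral_nonneg fun y => sqnorm_nonneg _
  have hA : (∫⁻ y, ENNReal.ofReal ((v y)^2) ∂μ) ≤ ENNReal.ofReal (CP^2 * Iwt) := by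
    have step1 : (∫⁻ y, ENNReal.ofReal ((v y)^2) ∂μ) =
        ∫⁻ p, ENNReal.ofReal ((F p)^2) ∂(μ.map T) := by
      rw [lintegral_map hFmeas2 hTmeas]
      refine lintegral_congr fun y => by rw [hvF y]
    have step2 : (∫⁻ p, ENNReal.ofReal ((F p)^2) ∂(μ.map T)) =
        ∫⁻ x, ∫⁻ z, ENNReal.ofReal ((F (x, z))^2) ∂(κ x) ∂ν := by
      rw [hmapT, Measure.lintegral_compProd hFmeas2]
    have step3 : (∫⁻ x, ∫⁻ z, ENNReal.ofReal ((F (x, z))^2) ∂(κ x) ∂ν) ≤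
        ∫⁻ x, ENNReal.ofReal (CP^2) * ∫⁻ z, ENNReal.ofReal (G (x, z)) ∂(κ x) ∂ν :=
      lintegral_mono_ae hslice
    have step4 : (∫⁻ x, ENNReal.ofReal (CP^2) * ∫⁻ z, ENNReal.ofReal (G (x, z)) ∂(κ x) ∂ν) =
        ENNReal.ofReal (CP^2) * ∫⁻ x, ∫⁻ z, ENNReal.ofReal (G (x, z)) ∂(κ x) ∂ν := by
      rw [lintegral_const_mul _ hGmeas2.lintegral_kernel_prod_right']
    have step5 : (∫⁻ x, ∫⁻ z, ENNReal.ofReal (G (x, z)) ∂(κ x) ∂ν) =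
        ∫⁻ y, ENNReal.ofReal (sqnorm (Wᵀ.mulVec (grad fL y))) ∂μ := by
      rw [← Measure.lintegral_compProd hGmeas2, ← hmapT, lintegral_map hGmeas2 hTmeas]
      refine lintegral_congr fun y => ?_
      show ENNReal.ofReal
          (sqnorm (Wᵀ.mulVec (grad fL (V.mulVec (Vᵀ.mulVec y) + W.mulVec (Wᵀ.mulVec y)))))
        = ENNReal.ofReal (sqnorm (Wᵀ.mulVec (grad fL y)))
      rw [hrecon y]
    have step6 : (∫⁻ y, ENNReal.ofReal (sqnorm (Wᵀ.mulVec (grad fL y))) ∂μ) =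
        ENNReal.ofReal Iwt := by
      rw [hIwt_def, ofReal_integral_eq_lintegral_ofReal hGwt_int
        (Filter.Eventually.of_forall fun y => sqnorm_nonneg _)]
    calc (∫⁻ y, ENNReal.ofReal ((v y)^2) ∂μ)
        = ∫⁻ x, ∫⁻ z, ENNReal.ofReal ((F (x, z))^2) ∂(κ x) ∂ν := by rw [step1, step2]
      _ ≤ ∫⁻ x, ENNReal.ofReal (CP^2) * ∫⁻ z, ENNReal.ofReal (G (x, z)) ∂(κ x) ∂ν := step3
      _ = ENNReal.ofReal (CP^2) * ENNReal.ofReal Iwt := by rw [step4, step5, step6]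
      _ = ENNReal.ofReal (CP^2 * Iwt) := (ENNReal.ofReal_mul (sq_nonneg CP)).symm
  -- v is in L²
  have hvsm : StronglyMeasurable v :=
    hfL.continuous.stronglyMeasurable.sub (hgs.comp_measurable hcontVt.measurable)
  have hv2int : Integrable (fun y => (v y)^2) μ := by
    refine ⟨(hvsm.pow 2).aestronglyMeasurable, ?_⟩
    rw [hasFiniteIntegral_iff_ofReal (Filter.Eventually.of_forall fun y => sq_nonneg _)]
    exact lt_of_le_of_lt hA ENNReal.ofReal_lt_top
  have hvmem : MemLp v 2 μ := (memLp_two_iff_integrable_sq hvsm.aestronglyMeasurable).mpr hv2int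
  -- real-valued bound on ∫ v²
  have hvreal : (∫ y, (v y)^2 ∂μ) ≤ CP^2 * Iwt := by
    have h1 : (∫ y, (v y)^2 ∂μ) = (∫⁻ y, ENNReal.ofReal ((v y)^2) ∂μ).toReal := by
      rw [integral_eq_lintegral_of_nonneg_ae
        (Filter.Eventually.of_forall fun y => sq_nonneg _) (hvsm.pow 2).aestronglyMeasurable]
    rw [h1]
    calc (∫⁻ y, ENNReal.ofReal ((v y)^2) ∂μ).toReal
        ≤ (ENNReal.ofReal (CP^2 * Iwt)).toReal :=
          ENNReal.toReal_mono ENNReal.ofReal_ne_top hA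
      _ = CP^2 * Iwt := ENNReal.toReal_ofReal (by positivity)
  have hvsqrt : Real.sqrt (∫ y, (v y)^2 ∂μ) ≤ CP * Real.sqrt Iwt := by
    calc Real.sqrt (∫ y, (v y)^2 ∂μ) ≤ Real.sqrt (CP^2 * Iwt) := Real.sqrt_le_sqrt hvreal
      _ = CP * Real.sqrt Iwt := by
        rw [Real.sqrt_mul (sq_nonneg CP), Real.sqrt_sq hCP.le]
  -- identify the final integral
  have hIfinal : (∫ y, sqnorm (((1 : Matrix (Fin d) (Fin d) ℝ) - V * Vᵀ).mulVec (grad fL y)) ∂μ)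
      = Iwt := by
    rw [hIwt_def]
    exact integral_congr_ae (Filter.Eventually.of_forall fun y => proj_eq V W hV hVW _)
  -- triangle inequality
  have hdecomp : (∫ y, (finf y - gstarL (Vᵀ.mulVec y))^2 ∂μ) =
      ∫ y, ((finf y - fL y) + v y)^2 ∂μ := by
    refine integral_congr_ae (Filter.Eventually.of_forall fun y => ?_)
    simp only [hv_def]; ring
  rw [hdecomp, hIfinal]
  calc Real.sqrt (∫ y, ((finf y - fL y) + v y)^2 ∂μ)
      ≤ Real.sqrt (∫ y, (finf y - fL y)^2 ∂μ) + Real.sqrt (∫ y, (v y)^2 ∂μ) :=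
        sqrt_integral_sq_add_le μ _ _ (hfinf.sub hfL2) hvmem
    _ ≤ Real.sqrt (∫ y, (finf y - fL y)^2 ∂μ) + CP * Real.sqrt Iwt := by linarith
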